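/- arXiv:2206.06766 — 4 statements merged into one kernel-verified Lean document; each statement's English description precedes it below -/
import Mathlib

section
/- Let a : ℝ → ℝ be twice continuously differentiable with a, a', a'' bounded, and let b : ℝ → ℝ be continuously differentiable with b, b' bounded. Then for every φ ∈ 𝒮(ℝ): ∫ (−a(x)φ''(x) + b(x)φ'(x))·φ(x) dx = −(1/2)∫ a''(x)φ(x)² dx + ∫ a(x)·φ'(x)² dx − (1/2)∫ b'(x)φ(x)² dx. -/
open MeasureTheory SchwartzMap Filter

/-- Whole-line FTC: integral of an integrable derivative of a function
vanishing at both infinities is zero. -/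
lemma aux_integral_deriv_eq_zero (g g' : ℝ → ℝ)
    (hg : ∀ x, HasDerivAt g (g' x) x) (hint : Integrable g')
    (htop : Tendsto g atTop (nhds 0)) (hbot : Tendsto g atBot (nhds 0)) :
    ∫ x, g' x = 0 := by
  have h1 : ∫ x in Set.Ioi (0:ℝ), g' x = 0 - g 0 :=
    integral_Ioi_of_hasDerivAt_of_tendsto' (fun x _ => hg x) hint.integrableOn htop
  have h2 : ∫ x in Set.Iic (0:ℝ), g' x = g 0 - 0 :=
    integral_Iic_of_hasDerivAt_of_tendsto' (fun x _ => hg x) hint.integrableOn hbot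
  have h3 := intervalIntegral.integral_Iic_add_Ioi (b := (0:ℝ)) hint.integrableOn hint.integrableOn
  rw [← h3, h1, h2]; ring

lemma aux_schwartz_bound (f : 𝓢(ℝ, ℝ)) : ∃ C, ∀ x, ‖f x‖ ≤ C := by
  obtain ⟨C, hC⟩ := f.decay 0 0
  exact ⟨C, fun x => by simpa using hC.2 x⟩

lemma aux_schwartz_tendsto_top (f : 𝓢(ℝ, ℝ)) : Tendsto f atTop (nhds 0) :=
  (f.toZeroAtInfty.zero_at_infty').mono_left atTop_le_cocompact

lemma aux_schwartz_tendsto_bot (f : 𝓢(ℝ, ℝ)) : Tendsto f atBot (nhds 0) :=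
  (f.toZeroAtInfty.zero_at_infty').mono_left atBot_le_cocompact

/-- bounded measurable × Schwartz × Schwartz is integrable. -/
lemma aux_integrable (c : ℝ → ℝ) (hc : Continuous c) (hcb : ∃ C, ∀ x, |c x| ≤ C)
    (f g : 𝓢(ℝ, ℝ)) : Integrable (fun x => c x * (f x * g x)) := by
  have hfg : Integrable (fun x => f x * g x) :=
    (g.integrable (μ := volume)).bdd_mul (c := (aux_schwartz_bound f).choose) f.continuous.aestronglyMeasurable (ae_of_all _ (aux_schwartz_bound f).choose_spec)
  exact hfg.bdd_mul (c := hcb.choose) hc.aestronglyMeasurable (ae_of_all _ (by simpa [Real.norm_eq_abs] using hcb.choose_spec))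

lemma aux_tendsto_top (c : ℝ → ℝ) (hcb : ∃ C, ∀ x, |c x| ≤ C) (f g : 𝓢(ℝ, ℝ)) :
    Tendsto (fun x => c x * (f x * g x)) atTop (nhds 0) := by
  obtain ⟨C, hC⟩ := hcb
  apply squeeze_zero_norm (a := fun x => C * ‖f x * g x‖)
  · intro x
    rw [norm_mul]
    exact mul_le_mul_of_nonneg_right (hC x) (norm_nonneg _)
  · have : Tendsto (fun x => f x * g x) atTop (nhds 0) := by
      simpa using (aux_schwartz_tendsto_top f).mul (aux_schwartz_tendsto_top g)
    simpa using (this.norm.const_mul C)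

lemma aux_tendsto_bot (c : ℝ → ℝ) (hcb : ∃ C, ∀ x, |c x| ≤ C) (f g : 𝓢(ℝ, ℝ)) :
    Tendsto (fun x => c x * (f x * g x)) atBot (nhds 0) := by
  obtain ⟨C, hC⟩ := hcb
  apply squeeze_zero_norm (a := fun x => C * ‖f x * g x‖)
  · intro x
    rw [norm_mul]
    exact mul_le_mul_of_nonneg_right (hC x) (norm_nonneg _)
  · have : Tendsto (fun x => f x * g x) atBot (nhds 0) := by
      simpa using (aux_schwartz_tendsto_bot f).mul (aux_schwartz_tendsto_bot g)
    simpa using (this.norm.const_mul C)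

/-- The key integration-by-parts identity for a C¹ bounded `c` with bounded derivative
and Schwartz `f g`: `∫ c' f g + ∫ c f' g + ∫ c f g' = 0`. -/
lemma aux_parts (c : ℝ → ℝ) (hc : ContDiff ℝ 1 c)
    (hcb : ∃ C, ∀ x, |c x| ≤ C) (hcb' : ∃ C, ∀ x, |deriv c x| ≤ C)
    (f g : 𝓢(ℝ, ℝ)) :
    (∫ x, deriv c x * (f x * g x)) + (∫ x, c x * ((derivCLM ℝ ℝ f) x * g x))
      + (∫ x, c x * (f x * (derivCLM ℝ ℝ g) x)) = 0 := by
  have hc' : Continuous (deriv c) := (contDiff_one_iff_deriv.mp hc).2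
  have hcd : Differentiable ℝ c := (contDiff_one_iff_deriv.mp hc).1
  have i1 := aux_integrable (deriv c) hc' hcb' f g
  have i2 := aux_integrable c hc.continuous hcb (derivCLM ℝ ℝ f) g
  have i3 := aux_integrable c hc.continuous hcb f (derivCLM ℝ ℝ g)
  have hderiv : ∀ x, HasDerivAt (fun x => c x * (f x * g x))
      (deriv c x * (f x * g x) + c x * ((derivCLM ℝ ℝ f) x * g x)
        + c x * (f x * (derivCLM ℝ ℝ g) x)) x := by
    intro x
    have hf : HasDerivAt f ((derivCLM ℝ ℝ f) x) x := by
      rw [derivCLM_apply]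
      exact ((f.smooth 1).differentiable (by norm_num) x).hasDerivAt
    have hg : HasDerivAt g ((derivCLM ℝ ℝ g) x) x := by
      rw [derivCLM_apply]
      exact ((g.smooth 1).differentiable (by norm_num) x).hasDerivAt
    have : HasDerivAt (fun y => c y * (f y * g y)) _ x := ((hcd x).hasDerivAt).mul (hf.mul hg)
    convert this using 1
    ring
  have hzero : ∫ x, (deriv c x * (f x * g x) + c x * ((derivCLM ℝ ℝ f) x * g x)
      + c x * (f x * (derivCLM ℝ ℝ g) x)) = 0 := by
    apply aux_integral_deriv_eq_zero (fun x => c x * (f x * g x)) _ hderiv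
      ((i1.add i2).add i3)
      (aux_tendsto_top c hcb f g) (aux_tendsto_bot c hcb f g)
  have i12 : Integrable (fun x => deriv c x * (f x * g x) + c x * ((derivCLM ℝ ℝ f) x * g x)) :=
    i1.add i2
  rw [← hzero, integral_add i12 i3, integral_add i1 i2]

/-- Integration-by-parts identity of Lemma B.2(i): for `a` of class `C²` with
`a, a', a''` bounded and `b` of class `C¹` with `b, b'` bounded, and every
Schwartz function `φ`,
`∫ (−aφ'' + bφ')·φ = −(1/2)∫ a''·φ² + ∫ a·(φ')² − (1/2)∫ b'·φ²`. -/
theorem stmt_1 (a b : ℝ → ℝ)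
    (ha : ContDiff ℝ 2 a)
    (ha0 : ∃ C, ∀ x, |a x| ≤ C)
    (ha1 : ∃ C, ∀ x, |deriv a x| ≤ C)
    (ha2 : ∃ C, ∀ x, |deriv (deriv a) x| ≤ C)
    (hb : ContDiff ℝ 1 b)
    (hb0 : ∃ C, ∀ x, |b x| ≤ C)
    (hb1 : ∃ C, ∀ x, |deriv b x| ≤ C)
    (φ : 𝓢(ℝ, ℝ)) :
    ∫ x, (-a x * deriv (deriv φ) x + b x * deriv (φ : ℝ → ℝ) x) * φ x =
      -(1 / 2) * (∫ x, deriv (deriv a) x * (φ x) ^ 2)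
        + (∫ x, a x * (deriv (φ : ℝ → ℝ) x) ^ 2)
        - (1 / 2) * (∫ x, deriv b x * (φ x) ^ 2) := by
  set ψ := derivCLM ℝ ℝ φ with hψdef
  set χ := derivCLM ℝ ℝ ψ with hχdef
  have hψ : deriv (φ : ℝ → ℝ) = ψ := funext fun x => (derivCLM_apply ℝ φ x).symm
  have hχ : deriv (ψ : ℝ → ℝ) = χ := funext fun x => (derivCLM_apply ℝ ψ x).symm
  -- C¹ facts about a' and a
  have ha' : ContDiff ℝ 1 (deriv a) := by
    have := (contDiff_succ_iff_deriv (n := 1)).mp (by norm_num at ha ⊢; exact ha)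
    exact this.2.2
  have haC1 : ContDiff ℝ 1 a := ha.of_le (by norm_num)
  -- three integration-by-parts identities
  have H1 := aux_parts (deriv a) ha' ha1 ha2 φ φ
  have H2 := aux_parts a haC1 ha0 ha1 ψ φ
  have H3 := aux_parts b hb hb0 hb1 φ φ
  rw [← hψdef] at H1 H2 H3
  rw [← hχdef] at H2
  -- rewrite the LHS
  have iL1 := aux_integrable a haC1.continuous ha0 χ φ
  have iL2 := aux_integrable b hb.continuous hb0 ψ φ
  have hLHS : ∫ x, (-a x * deriv (deriv φ) x + b x * deriv (φ : ℝ → ℝ) x) * φ x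
      = -(∫ x, a x * (χ x * φ x)) + (∫ x, b x * (ψ x * φ x)) := by
    have j1 : Integrable (fun x => -(a x * (χ x * φ x))) := iL1.neg
    have step : ∫ x, (-a x * deriv (deriv (φ : ℝ → ℝ)) x + b x * deriv (φ : ℝ → ℝ) x) * φ x
        = ∫ x, -(a x * (χ x * φ x)) + b x * (ψ x * φ x) := by
      rw [hψ, hχ]; congr 1; funext x; ring
    rw [step, integral_add j1 iL2, integral_neg]
  rw [hLHS, hψ]
  -- rewrite squared integrals
  have q1 : (∫ x, deriv (deriv a) x * (φ x) ^ 2) = ∫ x, deriv (deriv a) x * (φ x * φ x) := by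
    congr 1; funext x; ring
  have q4 : (∫ x, a x * (ψ x : ℝ) ^ 2) = ∫ x, a x * (ψ x * ψ x) := by
    congr 1; funext x; ring
  have q5 : (∫ x, deriv b x * (φ x) ^ 2) = ∫ x, deriv b x * (φ x * φ x) := by
    congr 1; funext x; ring
  rw [q1, q4, q5]
  -- commutation equalities
  have c1 : (∫ x, deriv a x * (φ x * ψ x)) = ∫ x, deriv a x * (ψ x * φ x) := by
    congr 1; funext x; ring
  have c2 : (∫ x, b x * (φ x * ψ x)) = ∫ x, b x * (ψ x * φ x) := by
    congr 1; funext x; ring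
  rw [c1] at H1
  rw [c2] at H3
  linarith [H1, H2, H3]
end

section
/- Let a : ℝ → ℝ be twice continuously differentiable with a, a', a'' bounded and a(x) ≥ 0 for all x, and let b : ℝ → ℝ be continuously differentiable with b, b' bounded. Set β := (1/2)(sup_{x∈ℝ}|a''(x)| + sup_{x∈ℝ}|b'(x)|). Then for every φ ∈ 𝒮(ℝ): ∫ (−a(x)φ''(x) + b(x)φ'(x))·φ(x) dx ≥ −β · ∫ φ(x)² dx. -/
open MeasureTheory SchwartzMap

lemma schwartz_bdd (ψ : 𝓢(ℝ, ℝ)) : ∃ C, ∀ x, ‖ψ x‖ ≤ C := by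
  obtain ⟨C, hC⟩ := ψ.decay 0 0
  exact ⟨C, fun x => by simpa [norm_iteratedFDeriv_zero] using hC.2 x⟩

/-- bounded continuous `c` times product of two Schwartz functions is integrable. -/
lemma aux_int (c : ℝ → ℝ) (hc : Continuous c) (hcb : ∃ C, ∀ x, |c x| ≤ C)
    (ψ1 ψ2 : 𝓢(ℝ, ℝ)) : Integrable (fun x => c x * ψ1 x * ψ2 x) volume := by
  obtain ⟨C, hC⟩ := hcb
  obtain ⟨C1, hC1⟩ := schwartz_bdd ψ1
  have h := ψ2.integrable (μ := volume)
  have := h.bdd_mul (f := fun x => c x * ψ1 x) (c := C * C1)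
    ((hc.mul ψ1.continuous).aestronglyMeasurable) (Filter.Eventually.of_forall fun x => by
      have h0 : (0:ℝ) ≤ C := le_trans (abs_nonneg _) (hC 0)
      calc ‖c x * ψ1 x‖ = |c x| * ‖ψ1 x‖ := by rw [norm_mul]; rfl
        _ ≤ C * C1 := mul_le_mul (hC x) (hC1 x) (norm_nonneg _) h0)
  simpa [mul_assoc] using this

/-- Accretivity estimate of Lemma B.2(i): with
`β = (1/2)(sup |a''| + sup |b'|)`, for every Schwartz function `φ`,
`∫ (−aφ'' + bφ')·φ ≥ −β ∫ φ²`. -/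
theorem stmt_2 (a b : ℝ → ℝ)
    (ha : ContDiff ℝ 2 a)
    (ha0 : ∃ C, ∀ x, |a x| ≤ C)
    (ha1 : ∃ C, ∀ x, |deriv a x| ≤ C)
    (ha2 : ∃ C, ∀ x, |deriv (deriv a) x| ≤ C)
    (hapos : ∀ x, 0 ≤ a x)
    (hb : ContDiff ℝ 1 b)
    (hb0 : ∃ C, ∀ x, |b x| ≤ C)
    (hb1 : ∃ C, ∀ x, |deriv b x| ≤ C)
    (β : ℝ)
    (hβ : β = (1 / 2) * ((⨆ x : ℝ, |deriv (deriv a) x|) + ⨆ x : ℝ, |deriv b x|))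
    (φ : 𝓢(ℝ, ℝ)) :
    ∫ x, (-a x * deriv (deriv φ) x + b x * deriv (φ : ℝ → ℝ) x) * φ x ≥
      -β * ∫ x, (φ x) ^ 2 := by
  -- Schwartz derivatives
  set φ1 : 𝓢(ℝ, ℝ) := SchwartzMap.derivCLM ℝ ℝ φ with hφ1
  set φ2 : 𝓢(ℝ, ℝ) := SchwartzMap.derivCLM ℝ ℝ φ1 with hφ2
  have heq1 : deriv (φ : ℝ → ℝ) = (φ1 : ℝ → ℝ) := by
    funext x; exact (SchwartzMap.derivCLM_apply ℝ φ x).symm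
  have heq2 : deriv (deriv (φ : ℝ → ℝ)) = (φ2 : ℝ → ℝ) := by
    rw [heq1]; funext x; exact (SchwartzMap.derivCLM_apply ℝ φ1 x).symm
  -- smoothness of a, b
  have ha' : ContDiff ℝ 1 (deriv a) := by
    have := (contDiff_succ_iff_deriv (n := 1)).mp (by exact_mod_cast ha)
    exact this.2.2
  have hca : Continuous a := ha.continuous
  have hca' : Continuous (deriv a) := ha'.continuous
  have hca'' : Continuous (deriv (deriv a)) := ((contDiff_one_iff_deriv).mp ha').2
  have hcb : Continuous b := hb.continuous
  have hcb' : Continuous (deriv b) := ((contDiff_one_iff_deriv).mp hb).2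
  -- HasDerivAt facts
  have hda : ∀ x, HasDerivAt a (deriv a x) x :=
    fun x => ((ha.differentiable (by norm_num)) x).hasDerivAt
  have hda' : ∀ x, HasDerivAt (deriv a) (deriv (deriv a) x) x :=
    fun x => ((ha'.differentiable one_ne_zero) x).hasDerivAt
  have hdb : ∀ x, HasDerivAt b (deriv b x) x :=
    fun x => ((hb.differentiable one_ne_zero) x).hasDerivAt
  have hdφ : ∀ x, HasDerivAt (φ : ℝ → ℝ) (φ1 x) x := fun x => by
    have := (φ.differentiable x).hasDerivAt
    rwa [show deriv (φ : ℝ → ℝ) x = φ1 x from congrFun heq1 x] at this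
  have hdφ1 : ∀ x, HasDerivAt (φ1 : ℝ → ℝ) (φ2 x) x := fun x => by
    have := (φ1.differentiable x).hasDerivAt
    rwa [show deriv (φ1 : ℝ → ℝ) x = φ2 x from (SchwartzMap.derivCLM_apply ℝ φ1 x)] at this
  -- boundary function g and its derivative g'
  set g : ℝ → ℝ := fun x => (1/2) * b x * (φ x)^2 - a x * φ x * φ1 x
      + (1/2) * deriv a x * (φ x)^2 with hg_def
  set g' : ℝ → ℝ := fun x => b x * φ1 x * φ x + (1/2) * deriv b x * (φ x)^2
      - a x * (φ1 x)^2 - a x * φ x * φ2 x + (1/2) * deriv (deriv a) x * (φ x)^2 with hg'_def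
  have hg : ∀ x, HasDerivAt g (g' x) x := by
    intro x
    have h1 : HasDerivAt (fun y => (1/2) * b y * (φ y)^2)
        ((1/2 * deriv b x) * (φ x)^2 + (1/2 * b x) * (2 * φ x ^ 1 * φ1 x)) x := by
      have := (((hdb x).const_mul (1/2)).mul ((hdφ x).pow 2))
      simpa [Pi.mul_def, Pi.pow_def] using this
    have h2 : HasDerivAt (fun y => a y * φ y * φ1 y)
        ((deriv a x * φ x + a x * φ1 x) * φ1 x + (a x * φ x) * φ2 x) x :=
      ((hda x).mul (hdφ x)).mul (hdφ1 x)
    have h3 : HasDerivAt (fun y => (1/2) * deriv a y * (φ y)^2)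
        ((1/2 * deriv (deriv a) x) * (φ x)^2 + (1/2 * deriv a x) * (2 * φ x ^ 1 * φ1 x)) x := by
      have := (((hda' x).const_mul (1/2)).mul ((hdφ x).pow 2))
      simpa [Pi.mul_def, Pi.pow_def] using this
    have := (h1.sub h2).add h3
    refine HasDerivAt.congr_deriv this ?_
    simp only [hg'_def, pow_one]
    ring
  -- integrability
  have Iφφ : Integrable (fun x => (1:ℝ) * φ x * φ x) volume :=
    aux_int 1 continuous_const ⟨1, fun _ => le_of_eq abs_one⟩ φ φ
  have Iφ2 : Integrable (fun x => (φ x)^2) volume := by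
    simpa [pow_two] using Iφφ
  have Ig : Integrable g volume := by
    have t1 := aux_int b hcb hb0 φ φ
    have t2 := aux_int a hca ha0 φ φ1
    have t3 := aux_int (deriv a) hca' ha1 φ φ
    apply Integrable.add
    apply Integrable.sub
    · simpa [pow_two, mul_assoc, mul_comm, mul_left_comm] using t1.const_mul (1/2)
    · exact t2
    · simpa [pow_two, mul_assoc, mul_comm, mul_left_comm] using t3.const_mul (1/2)
  have Ig' : Integrable g' volume := by
    have t1 := aux_int b hcb hb0 φ1 φ
    have t2 := aux_int (deriv b) hcb' hb1 φ φ
    have t3 := aux_int a hca ha0 φ1 φ1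
    have t4 := aux_int a hca ha0 φ φ2
    have t5 := aux_int (deriv (deriv a)) hca'' ha2 φ φ
    have e2 : Integrable (fun x => (1/2) * deriv b x * (φ x)^2) volume := by
      simpa [pow_two, mul_assoc, mul_comm, mul_left_comm] using t2.const_mul (1/2)
    have e3 : Integrable (fun x => a x * (φ1 x)^2) volume := by
      simpa [pow_two, mul_assoc] using t3
    have e5 : Integrable (fun x => (1/2) * deriv (deriv a) x * (φ x)^2) volume := by
      simpa [pow_two, mul_assoc, mul_comm, mul_left_comm] using t5.const_mul (1/2)
    exact ((((t1.add e2).sub e3).sub t4).add e5)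
  have hzero : ∫ x, g' x = 0 :=
    integral_eq_zero_of_hasDerivAt_of_integrable hg Ig' Ig
  -- rewrite the integrand
  have key : (fun x => (-a x * deriv (deriv (φ : ℝ → ℝ)) x + b x * deriv (φ : ℝ → ℝ) x) * φ x)
      = fun x => g' x + (a x * (φ1 x)^2
          - (1/2) * (deriv (deriv a) x + deriv b x) * (φ x)^2) := by
    funext x
    rw [heq2, heq1]
    simp only [hg'_def]
    ring
  have Iaφ1 : Integrable (fun x => a x * (φ1 x)^2) volume := by
    simpa [pow_two, mul_assoc] using aux_int a hca ha0 φ1 φ1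
  have Icφ : Integrable (fun x => (1/2) * (deriv (deriv a) x + deriv b x) * (φ x)^2) volume := by
    have := aux_int (fun x => (1/2) * (deriv (deriv a) x + deriv b x))
      (continuous_const.mul (hca''.add hcb'))
      (by
        obtain ⟨C1, h1⟩ := ha2; obtain ⟨C2, h2⟩ := hb1
        exact ⟨(1/2) * (C1 + C2), fun x => by
          rw [abs_mul]
          have : |deriv (deriv a) x + deriv b x| ≤ C1 + C2 :=
            (abs_add_le _ _).trans (add_le_add (h1 x) (h2 x))
          calc |(1/2 : ℝ)| * |deriv (deriv a) x + deriv b x|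
              = (1/2) * |deriv (deriv a) x + deriv b x| := by norm_num
            _ ≤ (1/2) * (C1 + C2) := by linarith⟩) φ φ
    simpa [pow_two, mul_assoc] using this
  have Irest : Integrable (fun x => a x * (φ1 x)^2
      - (1/2) * (deriv (deriv a) x + deriv b x) * (φ x)^2) volume := Iaφ1.sub Icφ
  rw [key, integral_add Ig' Irest, hzero, zero_add, integral_sub Iaφ1 Icφ]
  -- first term nonneg
  have hpos : 0 ≤ ∫ x, a x * (φ1 x)^2 :=
    integral_nonneg fun x => mul_nonneg (hapos x) (sq_nonneg _)
  -- second term bound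
  have hsup : ∀ x, (1/2) * (deriv (deriv a) x + deriv b x) ≤ β := by
    intro x
    obtain ⟨C1, h1⟩ := ha2; obtain ⟨C2, h2⟩ := hb1
    have bA : BddAbove (Set.range fun x => |deriv (deriv a) x|) :=
      ⟨C1, by rintro _ ⟨y, rfl⟩; exact h1 y⟩
    have bB : BddAbove (Set.range fun x => |deriv b x|) :=
      ⟨C2, by rintro _ ⟨y, rfl⟩; exact h2 y⟩
    have l1 : deriv (deriv a) x ≤ ⨆ x, |deriv (deriv a) x| :=
      (le_abs_self _).trans (le_ciSup bA x)
    have l2 : deriv b x ≤ ⨆ x, |deriv b x| :=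
      (le_abs_self _).trans (le_ciSup bB x)
    rw [hβ]; linarith
  have hineq : ∫ x, (1/2) * (deriv (deriv a) x + deriv b x) * (φ x)^2
      ≤ ∫ x, β * (φ x)^2 := by
    apply integral_mono Icφ (Iφ2.const_mul β)
    intro x
    exact mul_le_mul_of_nonneg_right (hsup x) (sq_nonneg _)
  rw [integral_const_mul] at hineq
  linarith [hpos, hineq]
end

section
/- Let μ₀ > 0, let a : ℝ → ℝ be twice continuously differentiable with a, a', a'' bounded and a(x) ≥ μ₀ for all x, and let b : ℝ → ℝ be continuously differentiable with b, b' bounded. Set β := (1/2)(sup_{x∈ℝ}|a''(x)| + sup_{x∈ℝ}|b'(x)|). Then for every φ ∈ 𝒮(ℝ): ∫ (−a(x)φ'''(x) + b(x)φ''(x))·φ'(x) dx ≥ μ₀·‖φ''‖_{L²}² − β·‖φ'‖_{L²}². -/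
open MeasureTheory SchwartzMap

/-- `‖u‖_{L²} := (∫ u²)^{1/2}`. -/
noncomputable def L2norm (u : ℝ → ℝ) : ℝ := Real.sqrt (∫ x, u x ^ 2)

/-- Estimates (A.10) in the proof of the Regularity Lemma B.3:
`⟨A(t)φ', φ'⟩ ≥ μ₀‖φ''‖² − β‖φ'‖²` where `A(t)ψ = −aψ'' + bψ'` and
`β = (1/2)(sup |a''| + sup |b'|)`. -/
theorem stmt_6 (μ₀ : ℝ) (hμ₀ : 0 < μ₀) (a b : ℝ → ℝ)
    (ha : ContDiff ℝ 2 a)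
    (ha0 : ∃ C, ∀ x, |a x| ≤ C)
    (ha1 : ∃ C, ∀ x, |deriv a x| ≤ C)
    (ha2 : ∃ C, ∀ x, |deriv (deriv a) x| ≤ C)
    (halb : ∀ x, μ₀ ≤ a x)
    (hb : ContDiff ℝ 1 b)
    (hb0 : ∃ C, ∀ x, |b x| ≤ C)
    (hb1 : ∃ C, ∀ x, |deriv b x| ≤ C)
    (β : ℝ)
    (hβ : β = (1 / 2) * ((⨆ x : ℝ, |deriv (deriv a) x|) + ⨆ x : ℝ, |deriv b x|))
    (φ : 𝓢(ℝ, ℝ)) :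
    ∫ x, (-a x * deriv (deriv (deriv φ)) x + b x * deriv (deriv φ) x)
        * deriv (φ : ℝ → ℝ) x ≥
      μ₀ * L2norm (deriv (deriv φ)) ^ 2 - β * L2norm (deriv (φ : ℝ → ℝ)) ^ 2 := by
  classical
  set ψ : 𝓢(ℝ, ℝ) := derivCLM ℝ ℝ φ with hψdef
  set ψ1 : 𝓢(ℝ, ℝ) := derivCLM ℝ ℝ ψ with hψ1def
  set ψ2 : 𝓢(ℝ, ℝ) := derivCLM ℝ ℝ ψ1 with hψ2def
  have h1 : deriv (φ : ℝ → ℝ) = ⇑ψ := funext fun x => (derivCLM_apply ℝ φ x).symm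
  have h2 : deriv (deriv (φ : ℝ → ℝ)) = ⇑ψ1 := by
    rw [h1]; exact funext fun x => (derivCLM_apply ℝ ψ x).symm
  have h3 : deriv (deriv (deriv (φ : ℝ → ℝ))) = ⇑ψ2 := by
    rw [h2]; exact funext fun x => (derivCLM_apply ℝ ψ1 x).symm
  rw [h3, h2, h1]
  -- basic smoothness facts
  have ha' : ContDiff ℝ (1 + 1) a := by norm_num; exact ha
  have hda : ContDiff ℝ 1 (deriv a) := (contDiff_succ_iff_deriv.mp ha').2.2
  have hdaD : Differentiable ℝ (deriv a) := (contDiff_one_iff_deriv.mp hda).1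
  have hda2c : Continuous (deriv (deriv a)) := (contDiff_one_iff_deriv.mp hda).2
  have haD : Differentiable ℝ a := ha.differentiable two_ne_zero
  have hbD : Differentiable ℝ b := hb.differentiable one_ne_zero
  have hdbc : Continuous (deriv b) := (contDiff_one_iff_deriv.mp hb).2
  -- derivative facts
  have hax : ∀ x, HasDerivAt a (deriv a x) x := fun x => (haD x).hasDerivAt
  have ha'x : ∀ x, HasDerivAt (deriv a) (deriv (deriv a) x) x := fun x => (hdaD x).hasDerivAt
  have hbx : ∀ x, HasDerivAt b (deriv b x) x := fun x => (hbD x).hasDerivAt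
  have hψx : ∀ x, HasDerivAt (⇑ψ) (ψ1 x) x := by
    intro x
    have := (ψ.differentiable x).hasDerivAt
    rwa [show deriv (⇑ψ) x = ψ1 x from (derivCLM_apply ℝ ψ x).symm] at this
  have hψ1x : ∀ x, HasDerivAt (⇑ψ1) (ψ2 x) x := by
    intro x
    have := (ψ1.differentiable x).hasDerivAt
    rwa [show deriv (⇑ψ1) x = ψ2 x from (derivCLM_apply ℝ ψ1 x).symm] at this
  -- boundedness facts
  have bψ : ∃ C, ∀ x, ‖ψ x‖ ≤ C := ⟨_, fun x => norm_le_seminorm ℝ ψ x⟩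
  have bψ1 : ∃ C, ∀ x, ‖ψ1 x‖ ≤ C := ⟨_, fun x => norm_le_seminorm ℝ ψ1 x⟩
  have ba : ∃ C, ∀ x, ‖a x‖ ≤ C := by
    obtain ⟨C, hC⟩ := ha0; exact ⟨C, fun x => by rw [Real.norm_eq_abs]; exact hC x⟩
  have bb : ∃ C, ∀ x, ‖b x‖ ≤ C := by
    obtain ⟨C, hC⟩ := hb0; exact ⟨C, fun x => by rw [Real.norm_eq_abs]; exact hC x⟩
  have bcoef : ∃ C, ∀ x, ‖(1/2 : ℝ) * (deriv (deriv a) x + deriv b x)‖ ≤ C := by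
    obtain ⟨C1, hC1⟩ := ha2; obtain ⟨C2, hC2⟩ := hb1
    refine ⟨(1/2) * (C1 + C2), fun x => ?_⟩
    rw [norm_mul, Real.norm_eq_abs, Real.norm_eq_abs]
    have : |deriv (deriv a) x + deriv b x| ≤ C1 + C2 :=
      (abs_add_le _ _).trans (add_le_add (hC1 x) (hC2 x))
    calc |(1/2 : ℝ)| * |deriv (deriv a) x + deriv b x| ≤ |(1/2 : ℝ)| * (C1 + C2) :=
          mul_le_mul_of_nonneg_left this (abs_nonneg _)
      _ = (1/2) * (C1 + C2) := by rw [abs_of_nonneg]; norm_num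
  -- integrability facts
  have hψψ1 : Integrable (fun x => ψ x * ψ1 x) := by
    exact ψ1.integrable.bdd_mul ψ.continuous.aestronglyMeasurable (Filter.Eventually.of_forall bψ.choose_spec)
  have hψψ2 : Integrable (fun x => ψ x * ψ2 x) := by
    exact ψ2.integrable.bdd_mul ψ.continuous.aestronglyMeasurable (Filter.Eventually.of_forall bψ.choose_spec)
  have hψψ : Integrable (fun x => ψ x * ψ x) := by
    exact ψ.integrable.bdd_mul ψ.continuous.aestronglyMeasurable (Filter.Eventually.of_forall bψ.choose_spec)
  have hψ1ψ1 : Integrable (fun x => ψ1 x * ψ1 x) := by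
    exact ψ1.integrable.bdd_mul ψ1.continuous.aestronglyMeasurable (Filter.Eventually.of_forall bψ1.choose_spec)
  have hg1 : Integrable (fun x => a x * (ψ1 x * ψ1 x)) :=
    hψ1ψ1.bdd_mul ha.continuous.aestronglyMeasurable (Filter.Eventually.of_forall ba.choose_spec)
  have hg2 : Integrable (fun x => a x * (ψ x * ψ2 x)) :=
    hψψ2.bdd_mul ha.continuous.aestronglyMeasurable (Filter.Eventually.of_forall ba.choose_spec)
  have hg3 : Integrable (fun x => (1/2 : ℝ) * (deriv (deriv a) x + deriv b x) * (ψ x * ψ x)) :=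
    hψψ.bdd_mul ((continuous_const.mul (hda2c.add hdbc))).aestronglyMeasurable (Filter.Eventually.of_forall bcoef.choose_spec)
  have hg4 : Integrable (fun x => b x * (ψ x * ψ1 x)) :=
    hψψ1.bdd_mul hb.continuous.aestronglyMeasurable (Filter.Eventually.of_forall bb.choose_spec)
  -- the function F and its derivative
  set F : ℝ → ℝ := fun x =>
    a x * (ψ x * ψ1 x) - (1/2) * (deriv a x + b x) * (ψ x * ψ x) with hFdef
  set F' : ℝ → ℝ := fun x =>
    a x * (ψ1 x * ψ1 x) + a x * (ψ x * ψ2 x)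
      - (1/2 : ℝ) * (deriv (deriv a) x + deriv b x) * (ψ x * ψ x)
      - b x * (ψ x * ψ1 x) with hF'def
  have hF : Integrable F := by
    refine Integrable.sub (hψψ1.bdd_mul ha.continuous.aestronglyMeasurable (Filter.Eventually.of_forall ba.choose_spec)) ?_
    refine hψψ.bdd_mul ((continuous_const.mul (hda.continuous.add hb.continuous))).aestronglyMeasurable
      (Filter.Eventually.of_forall (Exists.choose_spec (?_ : ∃ C, ∀ x, ‖(1/2 : ℝ) * (deriv a x + b x)‖ ≤ C)))
    obtain ⟨C1, hC1⟩ := ha1; obtain ⟨C2, hC2⟩ := hb0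
    refine ⟨(1/2) * (C1 + C2), fun x => ?_⟩
    rw [norm_mul, Real.norm_eq_abs, Real.norm_eq_abs]
    have : |deriv a x + b x| ≤ C1 + C2 := (abs_add_le _ _).trans (add_le_add (hC1 x) (hC2 x))
    calc |(1/2 : ℝ)| * |deriv a x + b x| ≤ |(1/2 : ℝ)| * (C1 + C2) :=
          mul_le_mul_of_nonneg_left this (abs_nonneg _)
      _ = (1/2) * (C1 + C2) := by rw [abs_of_nonneg]; norm_num
  have hF' : Integrable F' := ((hg1.add hg2).sub hg3).sub hg4
  have hFderiv : ∀ x, HasDerivAt F (F' x) x := by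
    intro x
    have hmain := ((hax x).mul ((hψx x).mul (hψ1x x))).sub
      ((((ha'x x).add (hbx x)).const_mul (1/2 : ℝ)).mul ((hψx x).mul (hψx x)))
    have heq : deriv a x * (ψ x * ψ1 x) + (ψ1 x * ψ1 x + ψ x * ψ2 x) * a x -
        ((1/2 : ℝ) * (deriv (deriv a) x + deriv b x) * (ψ x * ψ x) +
          (ψ1 x * ψ x + ψ x * ψ1 x) * ((1/2 : ℝ) * (deriv a x + b x))) = F' x := by
      simp only [hF'def]; ring
    rw [← heq]
    exact hmain.congr_deriv (by simp only [Pi.mul_apply, Pi.add_apply]; ring)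
  have hintF' : ∫ x, F' x = 0 :=
    integral_eq_zero_of_hasDerivAt_of_integrable hFderiv hF' hF
  -- the key identity
  have key : ∫ x, (-a x * ψ2 x + b x * ψ1 x) * ψ x
      = (∫ x, a x * (ψ1 x * ψ1 x))
        - ∫ x, (1/2 : ℝ) * (deriv (deriv a) x + deriv b x) * (ψ x * ψ x) := by
    have hG : Integrable (fun x => a x * (ψ1 x * ψ1 x)
        - (1/2 : ℝ) * (deriv (deriv a) x + deriv b x) * (ψ x * ψ x)) := hg1.sub hg3
    have hrw : (fun x => (-a x * ψ2 x + b x * ψ1 x) * ψ x)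
        = fun x => (a x * (ψ1 x * ψ1 x)
            - (1/2 : ℝ) * (deriv (deriv a) x + deriv b x) * (ψ x * ψ x)) - F' x := by
      funext x; simp only [hF'def]; ring
    have e1 : ∫ x, ((a x * (ψ1 x * ψ1 x)
          - (1/2 : ℝ) * (deriv (deriv a) x + deriv b x) * (ψ x * ψ x)) - F' x)
        = (∫ x, (a x * (ψ1 x * ψ1 x)
            - (1/2 : ℝ) * (deriv (deriv a) x + deriv b x) * (ψ x * ψ x))) - ∫ x, F' x :=
      integral_sub hG hF'
    have e2 : ∫ x, (a x * (ψ1 x * ψ1 x)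
          - (1/2 : ℝ) * (deriv (deriv a) x + deriv b x) * (ψ x * ψ x))
        = (∫ x, a x * (ψ1 x * ψ1 x))
          - ∫ x, (1/2 : ℝ) * (deriv (deriv a) x + deriv b x) * (ψ x * ψ x) :=
      integral_sub hg1 hg3
    rw [hrw, e1, e2, hintF', sub_zero]
  rw [key]
  -- L² norms
  have l1 : L2norm (⇑ψ1) ^ 2 = ∫ x, ψ1 x * ψ1 x := by
    rw [L2norm, Real.sq_sqrt (integral_nonneg fun x => sq_nonneg _)]
    simp_rw [pow_two]
  have l2 : L2norm (⇑ψ) ^ 2 = ∫ x, ψ x * ψ x := by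
    rw [L2norm, Real.sq_sqrt (integral_nonneg fun x => sq_nonneg _)]
    simp_rw [pow_two]
  rw [l1, l2]
  -- lower bound for the first term
  have low1 : μ₀ * ∫ x, ψ1 x * ψ1 x ≤ ∫ x, a x * (ψ1 x * ψ1 x) := by
    rw [← integral_const_mul]
    exact integral_mono (hψ1ψ1.const_mul μ₀) hg1
      fun x => mul_le_mul_of_nonneg_right (halb x) (mul_self_nonneg _)
  -- upper bound for the second term
  have low2 : (∫ x, (1/2 : ℝ) * (deriv (deriv a) x + deriv b x) * (ψ x * ψ x))
      ≤ β * ∫ x, ψ x * ψ x := by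
    obtain ⟨C1, hC1⟩ := ha2; obtain ⟨C2, hC2⟩ := hb1
    have hbdd1 : BddAbove (Set.range fun x => |deriv (deriv a) x|) :=
      ⟨C1, by rintro y ⟨x, rfl⟩; exact hC1 x⟩
    have hbdd2 : BddAbove (Set.range fun x => |deriv b x|) :=
      ⟨C2, by rintro y ⟨x, rfl⟩; exact hC2 x⟩
    rw [← integral_const_mul]
    refine integral_mono hg3 (hψψ.const_mul β) fun x => ?_
    have hx1 : deriv (deriv a) x ≤ ⨆ y : ℝ, |deriv (deriv a) y| :=
      (le_abs_self _).trans (le_ciSup hbdd1 x)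
    have hx2 : deriv b x ≤ ⨆ y : ℝ, |deriv b y| :=
      (le_abs_self _).trans (le_ciSup hbdd2 x)
    have hcx : (1/2 : ℝ) * (deriv (deriv a) x + deriv b x) ≤ β := by
      rw [hβ]
      have := add_le_add hx1 hx2
      linarith
    exact mul_le_mul_of_nonneg_right hcx (mul_self_nonneg _)
  linarith
end

section
/- Assume A_i ≥ k1 for all i, |B_i| ≤ R, |C_i| ≤ R, |D_i| ≤ R and 0 ≤ q_i ≤ R for all i. Then for every ρ > 0 there exists a constant κ > 0, depending only on E, k1, R and ρ (in particular independent of n, of u_e, and of the particular parameter values), such that for all w, v ∈ ℝⁿ with max_i |w_i| ≤ ρ and max_i |v_i| ≤ ρ: max_{1≤i≤n} |f_i(w) − f_i(v)| ≤ κ · max_{1≤i≤n} |w_i − v_i|. -/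
/-- The Arrhenius-law factor of the combustion model (equation (6) of the
paper): `g(θ) = exp(−E/θ)` for `θ > 0` and `g(θ) = 0` for `θ ≤ 0`. -/
noncomputable def arrhenius (E : ℝ) : ℝ → ℝ := fun θ =>
  if 0 < θ then Real.exp (-E / θ) else 0

/-- The source term (5) of the paper evaluated at a fixed point `(x,t)`, with
the conventions `w_0 = w_{n+1} = u_e`:
`f_i(w) = (−C_i w_i + (B_i w_i + D_i) g(w_i) − q_{i−1}(w_i − w_{i−1})
          + q_i(w_{i+1} − w_i)) / A_i`. -/
noncomputable def reaction (E : ℝ) (n : ℕ) (A B C D q : ℕ → ℝ) (ue : ℝ)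
    (w : ℕ → ℝ) (i : ℕ) : ℝ :=
  (-C i * w i + (B i * w i + D i) * arrhenius E (w i)
    - q (i - 1) * (w i - (if 1 ≤ i - 1 ∧ i - 1 ≤ n then w (i - 1) else ue))
    + q i * ((if 1 ≤ i + 1 ∧ i + 1 ≤ n then w (i + 1) else ue) - w i)) / A i

lemma arr_nonneg (E θ : ℝ) : 0 ≤ arrhenius E θ := by
  unfold arrhenius; split_ifs <;> positivity

lemma arr_le_one (E θ : ℝ) (hE : 0 < E) : arrhenius E θ ≤ 1 := by
  unfold arrhenius; split_ifs with h
  · rw [Real.exp_le_one_iff]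
    have : 0 < E / θ := div_pos hE h
    rw [neg_div]; linarith
  · norm_num

lemma exp_neg_le (t : ℝ) (ht : 0 < t) : Real.exp (-t) ≤ 1 / t := by
  rw [Real.exp_neg]
  have h1 : t ≤ Real.exp t := by linarith [Real.add_one_le_exp t]
  rw [inv_eq_one_div]
  exact one_div_le_one_div_of_le ht h1

lemma arr_mono (E : ℝ) (hE : 0 < E) {a b : ℝ} (hab : a ≤ b) :
    arrhenius E a ≤ arrhenius E b := by
  unfold arrhenius
  split_ifs with ha hb hb
  · apply Real.exp_le_exp.mpr
    rw [neg_div, neg_div, neg_le_neg_iff]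
    exact div_le_div_of_nonneg_left hE.le ha hab
  · exact absurd (lt_of_lt_of_le ha hab) hb
  · positivity
  · exact le_refl 0

lemma arr_lip_one (E : ℝ) (hE : 0 < E) {a b : ℝ} (hab : a ≤ b) :
    arrhenius E b - arrhenius E a ≤ 8 / E * (b - a) := by
  unfold arrhenius
  by_cases hb : 0 < b
  · rw [if_pos hb]
    by_cases ha : 0 < a
    · rw [if_pos ha]
      rcases le_or_gt (2 * a) b with h2 | h2
      · -- far apart: just bound exp(-E/b) ≤ b/E ≤ 2(b-a)/E
        have h1 : Real.exp (-E / b) ≤ b / E := by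
          have := exp_neg_le (E / b) (div_pos hE hb)
          rw [one_div_div] at this
          rw [neg_div]
          exact this
        have h3 : Real.exp (-E / a) > 0 := Real.exp_pos _
        have hbE : b / E ≤ 8 / E * (b - a) := by
          rw [div_le_iff₀ hE] at *
          have : b ≤ 8 * (b - a) := by linarith
          calc b ≤ 8 * (b - a) := this
          _ = 8 / E * (b - a) * E := by field_simp
        linarith
      · -- close: mean-value-type bound
        set x := Real.exp (-E / b) with hx
        have hx0 : 0 < x := Real.exp_pos _
        have key : Real.exp (-E / a) ≥ x * (1 - (E / a - E / b)) := by
          have h1 : Real.exp (-E / a) = x * Real.exp (-(E / a - E / b)) := by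
            rw [hx, ← Real.exp_add]; ring_nf
          rw [h1]
          have h2 : 1 - (E / a - E / b) ≤ Real.exp (-(E / a - E / b)) := by
            linarith [Real.add_one_le_exp (-(E / a - E / b))]
          nlinarith
        have hEb : x * E ^ 2 ≤ 4 * b ^ 2 := by
          have h1 : Real.exp (-(E / (2 * b))) ≤ 2 * b / E := by
            have := exp_neg_le (E / (2 * b)) (div_pos hE (by linarith))
            rw [one_div_div] at this; exact this
          have h2 : x = Real.exp (-(E / (2 * b))) * Real.exp (-(E / (2 * b))) := by
            rw [hx, ← Real.exp_add]; ring_nf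
          have h3 : x ≤ (2 * b / E) * (2 * b / E) := by
            rw [h2]; exact mul_le_mul h1 h1 (Real.exp_pos _).le (by positivity)
          have h4 : (2 * b / E) * (2 * b / E) * E ^ 2 = 4 * b ^ 2 := by
            field_simp; ring
          nlinarith [sq_nonneg E]
        -- now: exp(-E/b) - exp(-E/a) ≤ x * (E/a - E/b) ≤ 8/E * (b-a)
        have step1 : Real.exp (-E / b) - Real.exp (-E / a) ≤ x * (E / a - E / b) := by
          nlinarith
        have step2 : x * (E / a - E / b) ≤ 8 / E * (b - a) := by
          have hgoal : x * (E * (b - a)) / (a * b) ≤ 8 * (b - a) / E := by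
            rw [div_le_div_iff₀ (by positivity) hE]
            nlinarith [mul_le_mul_of_nonneg_left hEb (sub_nonneg.mpr hab),
              mul_nonneg (mul_nonneg (sub_nonneg.mpr hab)
                (by linarith : (0:ℝ) ≤ 2 * a - b)) hb.le]
          calc x * (E / a - E / b) = x * (E * (b - a)) / (a * b) := by
                rw [div_sub_div _ _ ha.ne' hb.ne']; ring
            _ ≤ 8 * (b - a) / E := hgoal
            _ = 8 / E * (b - a) := by ring
        linarith
    · rw [if_neg ha]
      have h1 : Real.exp (-E / b) ≤ b / E := by
        have := exp_neg_le (E / b) (div_pos hE hb)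
        rw [one_div_div] at this
        rw [neg_div]
        exact this
      have ha' : a ≤ 0 := not_lt.mp ha
      have : b / E ≤ 8 / E * (b - a) := by
        rw [div_le_iff₀ hE] at *
        calc b ≤ 8 * (b - a) := by linarith
        _ = 8 / E * (b - a) * E := by field_simp
      linarith
  · rw [if_neg hb, if_neg (by intro h; exact hb (lt_of_lt_of_le h hab))]
    have h8 : 0 < 8 / E := by positivity
    nlinarith

lemma arr_lip (E : ℝ) (hE : 0 < E) (a b : ℝ) :
    |arrhenius E a - arrhenius E b| ≤ 8 / E * |a - b| := by
  rcases le_total a b with h | h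
  · rw [abs_sub_comm, abs_of_nonneg (sub_nonneg.mpr (arr_mono E hE h)),
      abs_sub_comm a b, abs_of_nonneg (sub_nonneg.mpr h)]
    exact arr_lip_one E hE h
  · rw [abs_of_nonneg (sub_nonneg.mpr (arr_mono E hE h)),
      abs_of_nonneg (sub_nonneg.mpr h)]
    exact arr_lip_one E hE h

lemma abs_add_five (x1 x2 x3 x4 x5 : ℝ) :
    |x1 + x2 + x3 + x4 + x5| ≤ |x1| + |x2| + |x3| + |x4| + |x5| := by
  have a1 := abs_add_le (x1 + x2 + x3 + x4) x5
  have a2 := abs_add_le (x1 + x2 + x3) x4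
  have a3 := abs_add_le (x1 + x2) x3
  have a4 := abs_add_le x1 x2
  linarith

lemma core_bound (E R ρ M : ℝ) (hE : 0 < E) (hR : 0 < R) (hρ : 0 < ρ) (hM0 : 0 ≤ M)
    (Bi Ci Di qm qp wi vi wm vm wp vp : ℝ)
    (hB : |Bi| ≤ R) (hC : |Ci| ≤ R) (hD : |Di| ≤ R)
    (hqm0 : 0 ≤ qm) (hqmR : qm ≤ R) (hqp0 : 0 ≤ qp) (hqpR : qp ≤ R)
    (hvi : |vi| ≤ ρ)
    (hΔ : |wi - vi| ≤ M) (hΔm : |wm - vm| ≤ M) (hΔp : |wp - vp| ≤ M) :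
    |(-Ci * wi + (Bi * wi + Di) * arrhenius E wi - qm * (wi - wm) + qp * (wp - wi))
     - (-Ci * vi + (Bi * vi + Di) * arrhenius E vi - qm * (vi - vm) + qp * (vp - vi))|
    ≤ (6 * R + 8 * R * (ρ + 1) / E) * M := by
  set gw := arrhenius E wi with hgwdef
  set gv := arrhenius E vi with hgvdef
  have hgw1 : gw ≤ 1 := arr_le_one E wi hE
  have hgw0 : 0 ≤ gw := arr_nonneg E wi
  have hlip : |gw - gv| ≤ 8 / E * M :=
    calc |gw - gv| ≤ 8 / E * |wi - vi| := arr_lip E hE wi vi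
    _ ≤ 8 / E * M := mul_le_mul_of_nonneg_left hΔ (by positivity)
  have hid : (-Ci * wi + (Bi * wi + Di) * gw - qm * (wi - wm) + qp * (wp - wi))
      - (-Ci * vi + (Bi * vi + Di) * gv - qm * (vi - vm) + qp * (vp - vi))
      = -(Ci * (wi - vi)) + Bi * (wi - vi) * gw + (Bi * vi + Di) * (gw - gv)
        + (-(qm * ((wi - vi) - (wm - vm)))) + qp * ((wp - vp) - (wi - vi)) := by
    ring
  rw [hid]
  have t1 : |-(Ci * (wi - vi))| ≤ R * M := by
    rw [abs_neg, abs_mul]; exact mul_le_mul hC hΔ (abs_nonneg _) hR.le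
  have t2 : |Bi * (wi - vi) * gw| ≤ R * M := by
    rw [abs_mul, abs_mul]
    calc |Bi| * |wi - vi| * |gw| ≤ R * M * 1 := by
          apply mul_le_mul _ _ (abs_nonneg _) (by positivity)
          · exact mul_le_mul hB hΔ (abs_nonneg _) hR.le
          · rw [abs_of_nonneg hgw0]; exact hgw1
      _ = R * M := by ring
  have t3 : |(Bi * vi + Di) * (gw - gv)| ≤ (R * ρ + R) * (8 / E * M) := by
    rw [abs_mul]
    apply mul_le_mul _ hlip (abs_nonneg _) (by positivity)
    calc |Bi * vi + Di| ≤ |Bi * vi| + |Di| := abs_add_le _ _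
      _ = |Bi| * |vi| + |Di| := by rw [abs_mul]
      _ ≤ R * ρ + R := by
          have := mul_le_mul hB hvi (abs_nonneg vi) hR.le
          linarith
  have t4 : |-(qm * ((wi - vi) - (wm - vm)))| ≤ R * (2 * M) := by
    rw [abs_neg, abs_mul, abs_of_nonneg hqm0]
    have h1 : |(wi - vi) - (wm - vm)| ≤ 2 * M :=
      calc |(wi - vi) - (wm - vm)| ≤ |wi - vi| + |wm - vm| := abs_sub _ _
        _ ≤ 2 * M := by linarith
    exact mul_le_mul hqmR h1 (abs_nonneg _) hR.le
  have t5 : |qp * ((wp - vp) - (wi - vi))| ≤ R * (2 * M) := by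
    rw [abs_mul, abs_of_nonneg hqp0]
    have h1 : |(wp - vp) - (wi - vi)| ≤ 2 * M :=
      calc |(wp - vp) - (wi - vi)| ≤ |wp - vp| + |wi - vi| := abs_sub _ _
        _ ≤ 2 * M := by linarith
    exact mul_le_mul hqpR h1 (abs_nonneg _) hR.le
  have tri := abs_add_five (-(Ci * (wi - vi))) (Bi * (wi - vi) * gw)
    ((Bi * vi + Di) * (gw - gv)) (-(qm * ((wi - vi) - (wm - vm))))
    (qp * ((wp - vp) - (wi - vi)))
  have hre : (6 * R + 8 * R * (ρ + 1) / E) * M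
      = R * M + R * M + (R * ρ + R) * (8 / E * M) + R * (2 * M) + R * (2 * M) := by
    field_simp; ring
  linarith

/-- Pointwise core of Lemma 3.5(iii): the reaction function is Lipschitz on
bounded balls, with constant `κ` depending only on `E, k1, R, ρ` (and not on
`n`, on `u_e`, nor on the particular parameter values). -/
theorem stmt_14 (E k1 R : ℝ) (hE : 0 < E) (hk1 : 0 < k1) (hR : 0 < R)
    (ρ : ℝ) (hρ : 0 < ρ) :
    ∃ κ : ℝ, 0 < κ ∧
      ∀ (n : ℕ), 2 ≤ n →
      ∀ (A B C D q : ℕ → ℝ) (ue : ℝ),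
        (∀ i ∈ Finset.Icc 1 n, k1 ≤ A i) →
        (∀ i ∈ Finset.Icc 1 n, |B i| ≤ R) →
        (∀ i ∈ Finset.Icc 1 n, |C i| ≤ R) →
        (∀ i ∈ Finset.Icc 1 n, |D i| ≤ R) →
        (∀ i ∈ Finset.Icc 0 n, 0 ≤ q i ∧ q i ≤ R) →
        ∀ w v : ℕ → ℝ,
          (∀ i ∈ Finset.Icc 1 n, |w i| ≤ ρ) →
          (∀ i ∈ Finset.Icc 1 n, |v i| ≤ ρ) →
          ∀ hn : (Finset.Icc 1 n).Nonempty,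
          ∀ i ∈ Finset.Icc 1 n,
            |reaction E n A B C D q ue w i - reaction E n A B C D q ue v i| ≤
              κ * (Finset.Icc 1 n).sup' hn (fun j => |w j - v j|) := by
  refine ⟨(6 * R + 8 * R * (ρ + 1) / E) / k1, by positivity, ?_⟩
  intro n hn2 A B C D q ue hA hB hC hD hq w v hw hv hne i hi
  set M := (Finset.Icc 1 n).sup' hne (fun j => |w j - v j|) with hM
  have hMi : |w i - v i| ≤ M := Finset.le_sup' (fun j => |w j - v j|) hi
  have hM0 : 0 ≤ M := (abs_nonneg _).trans hMi
  have harg : ∀ j : ℕ,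
      |(if 1 ≤ j ∧ j ≤ n then w j else ue) - (if 1 ≤ j ∧ j ≤ n then v j else ue)| ≤ M := by
    intro j
    split_ifs with h
    · exact Finset.le_sup' (fun j => |w j - v j|) (Finset.mem_Icc.mpr h)
    · simpa using hM0
  obtain ⟨hi1, hin⟩ := Finset.mem_Icc.mp hi
  have hAi := hA i hi
  have hq1 := hq (i - 1) (Finset.mem_Icc.mpr ⟨Nat.zero_le _, le_trans (Nat.sub_le i 1) hin⟩)
  have hq2 := hq i (Finset.mem_Icc.mpr ⟨Nat.zero_le _, hin⟩)
  have hApos : 0 < A i := lt_of_lt_of_le hk1 hAi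
  unfold reaction
  rw [div_sub_div_same, abs_div, abs_of_pos hApos]
  have hnum := core_bound E R ρ M hE hR hρ hM0
    (B i) (C i) (D i) (q (i - 1)) (q i) (w i) (v i)
    (if 1 ≤ i - 1 ∧ i - 1 ≤ n then w (i - 1) else ue)
    (if 1 ≤ i - 1 ∧ i - 1 ≤ n then v (i - 1) else ue)
    (if 1 ≤ i + 1 ∧ i + 1 ≤ n then w (i + 1) else ue)
    (if 1 ≤ i + 1 ∧ i + 1 ≤ n then v (i + 1) else ue)
    (hB i hi) (hC i hi) (hD i hi) hq1.1 hq1.2 hq2.1 hq2.2 (hv i hi)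
    hMi (harg (i - 1)) (harg (i + 1))
  calc _ ≤ ((6 * R + 8 * R * (ρ + 1) / E) * M) / k1 :=
        div_le_div₀ (by positivity) hnum hk1 hAi
    _ = (6 * R + 8 * R * (ρ + 1) / E) / k1 * M := by ring
end
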